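/- Fix an integer T ≥ 1 and a dimension d ≥ 1. Let F ⊂ ℝ^d be a Borel set and let ρ be a Borel probability measure on ℝ^d with ρ(F) = 1. Suppose there are an integer M₀ ≥ 2 and s > 0 such that for every integer M ≥ M₀ and every Borel subset F' ⊂ F with ρ(F') > M^{−2}, the number N(F', M) of dyadic cubes of side length 2^{−TM} intersecting F' is at least 2^{sTM}. Then the s-dimensional Hausdorff measure of F satisfies H^s(F) ≥ c for some constant c > 0 depending only on T and d; in particular dimH(F) ≥ s. -/

import Mathlib

open MeasureTheory
open scoped ENNReal NNReal

/-- The half-open dyadic cube of side length `2⁻ⁿ` in `ℝ^d` indexed by `k ∈ ℤ^d`. -/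
def dyadicCube (d n : ℕ) (k : Fin d → ℤ) : Set (EuclideanSpace ℝ (Fin d)) :=
  {x | ∀ i, (k i : ℝ) / 2 ^ n ≤ x i ∧ x i < ((k i : ℝ) + 1) / 2 ^ n}


lemma mem_dyadicCube_iff {d n : ℕ} {k : Fin d → ℤ} {x : EuclideanSpace ℝ (Fin d)} :
    x ∈ dyadicCube d n k ↔ ∀ i, k i = ⌊(2:ℝ) ^ n * x i⌋ := by
  have h2 : (0:ℝ) < 2 ^ n := by positivity
  unfold dyadicCube
  simp only [Set.mem_setOf_eq]
  refine forall_congr' fun i => ?_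
  rw [div_le_iff₀ h2, lt_div_iff₀ h2, eq_comm, Int.floor_eq_iff]
  constructor
  · rintro ⟨h1', h2'⟩
    constructor
    · push_cast; linarith [mul_comm (x i) ((2:ℝ)^n)]
    · push_cast; linarith [mul_comm (x i) ((2:ℝ)^n)]
  · rintro ⟨h1', h2'⟩
    constructor
    · push_cast at h1' ⊢; linarith [mul_comm (x i) ((2:ℝ)^n)]
    · push_cast at h2' ⊢; linarith [mul_comm (x i) ((2:ℝ)^n)]

lemma coord_dist_le {d : ℕ} (x y : EuclideanSpace ℝ (Fin d)) (i : Fin d) :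
    |x i - y i| ≤ dist x y := by
  have h1 : dist (x i) (y i) ≤ dist ((WithLp.equiv 2 _) x) ((WithLp.equiv 2 _) y) :=
    dist_le_pi_dist ((WithLp.equiv 2 _) x) ((WithLp.equiv 2 _) y) i
  have h2 := (PiLp.lipschitzWith_ofLp 2 (fun _ : Fin d => ℝ)).dist_le_mul x y
  norm_num at h2
  calc |x i - y i| = dist (x i) (y i) := (Real.dist_eq _ _).symm
    _ ≤ _ := le_trans h1 h2

open Classical in
lemma tsum_cube_singleton {d : ℕ} (n : ℕ) (A : Set (EuclideanSpace ℝ (Fin d)))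
    (x : EuclideanSpace ℝ (Fin d)) (hA : A ⊆ {x}) :
    ∑' k : Fin d → ℤ, (if (dyadicCube d n k ∩ A).Nonempty then (1:ℝ≥0∞) else 0) ≤ 1 := by
  set k₀ : Fin d → ℤ := fun i => ⌊(2:ℝ) ^ n * x i⌋ with hk₀
  have hsum : ∑' k : Fin d → ℤ, (if (dyadicCube d n k ∩ A).Nonempty then (1:ℝ≥0∞) else 0)
      = ∑ k ∈ {k₀}, (if (dyadicCube d n k ∩ A).Nonempty then (1:ℝ≥0∞) else 0) := by
    refine tsum_eq_sum ?_
    intro k hk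
    simp only [Finset.mem_singleton] at hk
    rw [if_neg]
    rintro ⟨y, hy1, hy2⟩
    have hyx : y = x := hA hy2
    subst hyx
    exact hk (funext fun i => (mem_dyadicCube_iff.1 hy1) i)
  rw [hsum, Finset.sum_singleton]
  split <;> simp

open Classical in
lemma tsum_cube_count {d : ℕ} (n a : ℕ) (C : Set (EuclideanSpace ℝ (Fin d)))
    (hC : EMetric.diam C ≤ ENNReal.ofReal ((2:ℝ) ^ a / 2 ^ n)) :
    ∑' k : Fin d → ℤ, (if (dyadicCube d n k ∩ C).Nonempty then (1:ℝ≥0∞) else 0)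
      ≤ ((2:ℝ≥0∞) ^ (a + 2)) ^ d := by
  rcases C.eq_empty_or_nonempty with rfl | ⟨x₀, hx₀⟩
  · simp
  have h2 : (0:ℝ) < 2 ^ n := by positivity
  set b : Fin d → ℤ := fun i => ⌊(2:ℝ) ^ n * x₀ i⌋ with hb
  set B : Finset (Fin d → ℤ) := Fintype.piFinset fun i => Finset.Icc (b i - 2 ^ a) (b i + 2 ^ a)
    with hB
  have hsupp : ∀ k ∉ B, (if (dyadicCube d n k ∩ C).Nonempty then (1:ℝ≥0∞) else 0) = 0 := by
    intro k hk
    rw [if_neg]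
    rintro ⟨y, hy1, hy2⟩
    apply hk
    rw [hB, Fintype.mem_piFinset]
    intro i
    have hyc := hy1 i
    have hdy : dist y x₀ ≤ (2:ℝ) ^ a / 2 ^ n := by
      have := EMetric.edist_le_diam_of_mem hy2 hx₀
      have h' := this.trans hC
      rw [edist_dist] at h'
      exact (ENNReal.ofReal_le_ofReal_iff (by positivity)).1 h'
    have hcoord : |y i - x₀ i| ≤ (2:ℝ) ^ a / 2 ^ n := (coord_dist_le y x₀ i).trans hdy
    -- k i bounds
    have hk1 : (k i : ℝ) ≤ 2 ^ n * y i := by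
      rw [div_le_iff₀ h2] at hyc
      linarith [hyc.1, mul_comm (y i) ((2:ℝ)^n)]
    have hk2 : 2 ^ n * y i < (k i : ℝ) + 1 := by
      have := hyc.2
      rw [lt_div_iff₀ h2] at this
      linarith [mul_comm (y i) ((2:ℝ)^n)]
    have hyx : |2 ^ n * y i - 2 ^ n * x₀ i| ≤ (2:ℝ) ^ a := by
      rw [← mul_sub, abs_mul, abs_of_pos h2]
      calc 2 ^ n * |y i - x₀ i| ≤ 2 ^ n * ((2:ℝ) ^ a / 2 ^ n) := by
            exact mul_le_mul_of_nonneg_left hcoord (le_of_lt h2)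
        _ = (2:ℝ) ^ a := by field_simp
    have hfl1 : (b i : ℝ) ≤ 2 ^ n * x₀ i := Int.floor_le _
    have hfl2 : 2 ^ n * x₀ i < (b i : ℝ) + 1 := Int.lt_floor_add_one _
    have habs := abs_le.1 hyx
    rw [Finset.mem_Icc]
    constructor
    · -- b i - 2^a ≤ k i
      have : ((b i - 2 ^ a : ℤ) : ℝ) - 1 < (k i : ℝ) := by push_cast; nlinarith
      have := this
      rw [sub_lt_iff_lt_add] at this
      exact_mod_cast Int.lt_add_one_iff.1 (by exact_mod_cast this)
    · -- k i ≤ b i + 2^a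
      have : (k i : ℝ) < ((b i + 2 ^ a : ℤ) : ℝ) + 1 := by push_cast; nlinarith
      exact Int.lt_add_one_iff.1 (by exact_mod_cast this)
  rw [tsum_eq_sum hsupp]
  have hcard : (B.card : ℝ≥0∞) ≤ ((2:ℝ≥0∞) ^ (a + 2)) ^ d := by
    have h1 : B.card = (2 * 2 ^ a + 1) ^ d := by
      rw [hB, Fintype.card_piFinset]
      have : ∀ i : Fin d, (Finset.Icc (b i - 2 ^ a) (b i + 2 ^ a)).card = 2 * 2 ^ a + 1 := by
        intro i
        rw [Int.card_Icc]
        have : (b i + 2 ^ a + 1 - (b i - 2 ^ a) : ℤ) = 2 * 2 ^ a + 1 := by ring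
        rw [this, show ((2*2^a+1 : ℤ)) = ((2*2^a+1 : ℕ) : ℤ) by push_cast; ring,
          Int.toNat_natCast]
      simp [this]
    have h2' : (2 * 2 ^ a + 1 : ℕ) ≤ 2 ^ (a + 2) := by
      have : (1:ℕ) ≤ 2 ^ a := Nat.one_le_two_pow
      calc 2 * 2 ^ a + 1 ≤ 2 * 2 ^ a + 2 ^ a * 2 := by omega
        _ = 2 ^ (a + 2) := by ring
    calc (B.card : ℝ≥0∞) = ((2 * 2 ^ a + 1 : ℕ) : ℝ≥0∞) ^ d := by rw [h1]; push_cast; ring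
      _ ≤ ((2 ^ (a + 2) : ℕ) : ℝ≥0∞) ^ d := by
          have := (Nat.cast_le (α := ℝ≥0∞)).2 h2'
          gcongr
      _ = ((2:ℝ≥0∞) ^ (a + 2)) ^ d := by push_cast; ring
  refine le_trans ?_ hcard
  calc ∑ k ∈ B, (if (dyadicCube d n k ∩ C).Nonempty then (1:ℝ≥0∞) else 0)
      ≤ ∑ _k ∈ B, (1:ℝ≥0∞) := by
        refine Finset.sum_le_sum fun k _ => ?_
        split <;> simp
    _ = B.card := by simp

lemma real_tail_sum (K N : ℕ) (hK : 2 ≤ K) :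
    ∑ M ∈ Finset.Ico K N, ((M:ℝ) ^ 2)⁻¹ ≤ ((K:ℝ) - 1)⁻¹ := by
  rw [Finset.sum_Ico_eq_sum_range]
  set g : ℕ → ℝ := fun j => ((K + j : ℝ) - 1)⁻¹ with hg
  have hterm : ∀ j, (((K + j : ℕ) : ℝ) ^ 2)⁻¹ ≤ g j - g (j + 1) := by
    intro j
    have hx : (2:ℝ) ≤ (K:ℝ) + j := by
      have : (2:ℝ) ≤ (K:ℝ) := by exact_mod_cast hK
      have hj : (0:ℝ) ≤ j := Nat.cast_nonneg j
      linarith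
    have h1 : (0:ℝ) < (K:ℝ) + j - 1 := by linarith
    have h2 : (0:ℝ) < (K:ℝ) + j := by linarith
    have hgj : g j = ((K:ℝ) + j - 1)⁻¹ := rfl
    have hgj1 : g (j + 1) = ((K:ℝ) + j)⁻¹ := by
      simp only [hg]
      push_cast
      ring_nf
    rw [hgj, hgj1, inv_sub_inv (ne_of_gt h1) (ne_of_gt h2)]
    have hnum : (K:ℝ) + j - ((K:ℝ) + j - 1) = 1 := by ring
    rw [hnum]
    push_cast
    rw [div_eq_inv_mul, mul_one]
    apply inv_anti₀
    · positivity
    · nlinarith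
  calc ∑ j ∈ Finset.range (N - K), (((K + j : ℕ) : ℝ) ^ 2)⁻¹
      ≤ ∑ j ∈ Finset.range (N - K), (g j - g (j + 1)) := Finset.sum_le_sum fun j _ => hterm j
    _ = g 0 - g (N - K) := Finset.sum_range_sub' g (N - K)
    _ ≤ g 0 := by
        have : 0 ≤ g (N - K) := by
          have : (1:ℝ) ≤ (K:ℝ) + (N - K : ℕ) := by
            have : (2:ℝ) ≤ (K:ℝ) := by exact_mod_cast hK
            have := Nat.cast_nonneg (α := ℝ) (N - K)
            linarith
          simp only [hg]
          apply inv_nonneg.2; linarith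
        linarith
    _ = ((K:ℝ) - 1)⁻¹ := by simp [hg]

open Classical in
lemma ennreal_tail_lt_one {K : ℕ} (hK : 4 ≤ K) (g : ℕ → ℝ≥0∞)
    (hg : ∀ M, g M ≤ if K ≤ M then (((M:ℝ≥0∞)) ^ 2)⁻¹ else 0) :
    ∑' M, g M < 1 := by
  set G : ℕ → ℝ≥0∞ := fun M => if K ≤ M then (((M:ℝ≥0∞)) ^ 2)⁻¹ else 0 with hG
  have h1 : ∑' M, g M ≤ ∑' M, G M := ENNReal.tsum_le_tsum hg
  have h2 : ∑' M, G M ≤ ENNReal.ofReal (((K:ℝ) - 1)⁻¹) := by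
    rw [ENNReal.tsum_eq_iSup_sum]
    refine iSup_le fun s => ?_
    obtain ⟨N, hN⟩ := s.exists_nat_subset_range
    calc ∑ M ∈ s, G M ≤ ∑ M ∈ Finset.Ico K N, (((M:ℝ≥0∞)) ^ 2)⁻¹ := by
          rw [show ∑ M ∈ s, G M = ∑ M ∈ s.filter (fun M => K ≤ M), (((M:ℝ≥0∞)) ^ 2)⁻¹ by
            rw [Finset.sum_filter]]
          refine Finset.sum_le_sum_of_subset fun M hM => ?_
          simp only [Finset.mem_filter] at hM
          rw [Finset.mem_Ico]
          exact ⟨hM.2, Finset.mem_range.1 (hN hM.1)⟩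
      _ = ∑ M ∈ Finset.Ico K N, ENNReal.ofReal (((M:ℝ) ^ 2)⁻¹) := by
          refine Finset.sum_congr rfl fun M hM => ?_
          have hM1 : 1 ≤ M := le_trans (by omega) (Finset.mem_Ico.1 hM).1
          have hMpos : (0:ℝ) < (M:ℝ) := by exact_mod_cast hM1
          rw [ENNReal.ofReal_inv_of_pos (by positivity), ENNReal.ofReal_pow (by positivity),
            ENNReal.ofReal_natCast]
      _ = ENNReal.ofReal (∑ M ∈ Finset.Ico K N, ((M:ℝ) ^ 2)⁻¹) := by
          rw [ENNReal.ofReal_sum_of_nonneg]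
          intro M _; positivity
      _ ≤ ENNReal.ofReal (((K:ℝ) - 1)⁻¹) :=
          ENNReal.ofReal_le_ofReal (real_tail_sum K N (by omega))
  have h3 : ENNReal.ofReal (((K:ℝ) - 1)⁻¹) < 1 := by
    rw [ENNReal.ofReal_lt_one]
    have : (3:ℝ) ≤ (K:ℝ) - 1 := by
      have : (4:ℝ) ≤ (K:ℝ) := by exact_mod_cast hK
      linarith
    calc ((K:ℝ) - 1)⁻¹ ≤ (3:ℝ)⁻¹ := by
          apply inv_anti₀ <;> linarith
      _ < 1 := by norm_num
  exact lt_of_le_of_lt (h1.trans h2) h3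

open Classical in
lemma measure_inter_subsingleton_zero {T d : ℕ} (hT : 1 ≤ T)
    (F : Set (EuclideanSpace ℝ (Fin d))) (ρ : Measure (EuclideanSpace ℝ (Fin d)))
    (hF : MeasurableSet F) (s : ℝ) (M₀ : ℕ) (hs : 0 < s) (hM₀ : 2 ≤ M₀)
    (H : ∀ M : ℕ, M₀ ≤ M →
      ∀ F' : Set (EuclideanSpace ℝ (Fin d)), MeasurableSet F' → F' ⊆ F →
        (((M : ℝ≥0∞)) ^ 2)⁻¹ < ρ F' →
        (2 : ℝ≥0∞) ^ (s * ((T * M : ℕ) : ℝ)) ≤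
          ∑' k : Fin d → ℤ,
            if (dyadicCube d (T * M) k ∩ F').Nonempty then (1 : ℝ≥0∞) else 0)
    (C : Set (EuclideanSpace ℝ (Fin d))) (hC : IsClosed C)
    (hsub : (F ∩ C).Subsingleton) : ρ (F ∩ C) = 0 := by
  rcases (F ∩ C).eq_empty_or_nonempty with he | ⟨x, hx⟩
  · simp [he]
  by_contra hne
  obtain ⟨n, hn⟩ := ENNReal.exists_nat_gt (ENNReal.inv_ne_top.2 hne)
  set M := max n M₀ with hM
  have hMM₀ : M₀ ≤ M := le_max_right _ _
  have h1M : (1:ℝ≥0∞) ≤ (M:ℝ≥0∞) := by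
    have : 1 ≤ M := le_trans (by omega) hMM₀
    exact_mod_cast this
  have hlt : (((M : ℝ≥0∞)) ^ 2)⁻¹ < ρ (F ∩ C) := by
    have h2 : (ρ (F ∩ C))⁻¹ < ((M : ℝ≥0∞)) ^ 2 := by
      calc (ρ (F ∩ C))⁻¹ < (n:ℝ≥0∞) := hn
        _ ≤ (M:ℝ≥0∞) := by exact_mod_cast le_max_left n M₀
        _ ≤ ((M : ℝ≥0∞)) ^ 2 := le_self_pow h1M two_ne_zero
    calc (((M : ℝ≥0∞)) ^ 2)⁻¹ < ((ρ (F ∩ C))⁻¹)⁻¹ := ENNReal.inv_lt_inv.2 h2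
      _ = ρ (F ∩ C) := inv_inv _
  have hcount := H M hMM₀ (F ∩ C) (hF.inter hC.measurableSet) Set.inter_subset_left hlt
  have hsub' : F ∩ C ⊆ {x} := fun y hy => hsub hy hx
  have hle1 := tsum_cube_singleton (T * M) (F ∩ C) x hsub'
  have hgt1 : (1:ℝ≥0∞) < (2 : ℝ≥0∞) ^ (s * ((T * M : ℕ) : ℝ)) := by
    apply ENNReal.one_lt_rpow (by norm_num)
    have hTM : 0 < T * M := by
      have : 2 ≤ M := le_trans hM₀ hMM₀
      positivity
    have : (0:ℝ) < ((T * M : ℕ) : ℝ) := by exact_mod_cast hTM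
    positivity
  exact absurd (hcount.trans hle1) (not_le.2 hgt1)

open Classical in
lemma cover_sum_bound {T d : ℕ} (hT : 1 ≤ T) (hd : 1 ≤ d)
    (F : Set (EuclideanSpace ℝ (Fin d))) (ρ : Measure (EuclideanSpace ℝ (Fin d)))
    (hF : MeasurableSet F) (hρF : ρ F = 1) (s : ℝ) (M₀ : ℕ) (hs : 0 < s) (hM₀ : 2 ≤ M₀)
    (H : ∀ M : ℕ, M₀ ≤ M →
      ∀ F' : Set (EuclideanSpace ℝ (Fin d)), MeasurableSet F' → F' ⊆ F →
        (((M : ℝ≥0∞)) ^ 2)⁻¹ < ρ F' →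
        (2 : ℝ≥0∞) ^ (s * ((T * M : ℕ) : ℝ)) ≤
          ∑' k : Fin d → ℤ,
            if (dyadicCube d (T * M) k ∩ F').Nonempty then (1 : ℝ≥0∞) else 0)
    (t : ℕ → Set (EuclideanSpace ℝ (Fin d)))
    (hcov : F ⊆ ⋃ n, t n)
    (hdiam : ∀ n, EMetric.diam (t n) ≤ ((2:ℝ≥0∞) ^ (T * (M₀ + 1)))⁻¹) :
    (((2:ℝ≥0∞) ^ (T + 2)) ^ d)⁻¹ ≤ ∑' n, ⨆ _ : (t n).Nonempty, EMetric.diam (t n) ^ s := by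
  set K := M₀ + 2 with hK
  -- scale assignment
  have hex : ∀ n : ℕ, ∃ M : ℕ, EMetric.diam (t n) ≠ 0 →
      (((2:ℝ≥0∞) ^ (T * M))⁻¹ < EMetric.diam (t n) ∧
       EMetric.diam (t n) ≤ ((2:ℝ≥0∞) ^ (T * (M - 1)))⁻¹ ∧ K ≤ M) := by
    intro n
    by_cases hdn : EMetric.diam (t n) = 0
    · exact ⟨0, fun h => absurd hdn h⟩
    have hex0 : ∃ M : ℕ, ((2:ℝ≥0∞) ^ (T * M))⁻¹ < EMetric.diam (t n) := by
      obtain ⟨j, hj⟩ := ENNReal.exists_inv_two_pow_lt hdn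
      refine ⟨j, lt_of_le_of_lt ?_ hj⟩
      rw [← ENNReal.inv_pow]
      apply ENNReal.inv_le_inv.2
      exact pow_le_pow_right₀ one_le_two (Nat.le_mul_of_pos_left j (by omega))
    set M := Nat.find hex0 with hMdef
    refine ⟨M, fun _ => ⟨Nat.find_spec hex0, ?_, ?_⟩⟩
    · have hKM : K ≤ M := by
        rw [hMdef, Nat.le_find_iff]
        intro m hm
        apply not_lt.2
        refine le_trans (hdiam n) (ENNReal.inv_le_inv.2 ?_)
        exact pow_le_pow_right₀ one_le_two (Nat.mul_le_mul_left T (by omega))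
      have hmin := Nat.find_min hex0 (m := M - 1) (by omega)
      exact not_lt.1 hmin
    · rw [hMdef, Nat.le_find_iff]
      intro m hm
      apply not_lt.2
      refine le_trans (hdiam n) (ENNReal.inv_le_inv.2 ?_)
      exact pow_le_pow_right₀ one_le_two (Nat.mul_le_mul_left T (by omega))
  choose m hm using hex
  set S : ℕ → Set ℕ := fun M => {n | EMetric.diam (t n) ≠ 0 ∧ m n = M} with hS
  set U : ℕ → Set (EuclideanSpace ℝ (Fin d)) := fun M => ⋃ n ∈ S M, closure (t n) with hU
  set A : ℕ → Set (EuclideanSpace ℝ (Fin d)) := fun M => F ∩ U M with hA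
  have hAmeas : ∀ M, MeasurableSet (A M) := fun M =>
    hF.inter (MeasurableSet.biUnion (Set.to_countable _)
      fun n _ => isClosed_closure.measurableSet)
  set Z : Set (EuclideanSpace ℝ (Fin d)) :=
    ⋃ n ∈ {n : ℕ | EMetric.diam (t n) = 0}, closure (t n) with hZ
  have hZ0 : ρ (F ∩ Z) = 0 := by
    rw [hZ, Set.inter_iUnion₂]
    rw [measure_biUnion_null_iff (Set.to_countable _)]
    intro n hn
    refine measure_inter_subsingleton_zero hT F ρ hF s M₀ hs hM₀ H (closure (t n))
      isClosed_closure ?_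
    have hss : (closure (t n)).Subsingleton := by
      rw [← EMetric.diam_eq_zero_iff, EMetric.diam_closure]
      exact hn
    exact hss.anti Set.inter_subset_right
  -- 1 ≤ ∑ ρ (A M)
  have h1le : 1 ≤ ∑' M, ρ (A M) := by
    have hsub2 : F ⊆ (F ∩ Z) ∪ ⋃ M, A M := by
      intro x hx
      obtain ⟨n, hn⟩ := Set.mem_iUnion.1 (hcov hx)
      by_cases hdn : EMetric.diam (t n) = 0
      · exact Or.inl ⟨hx, Set.mem_biUnion hdn (subset_closure hn)⟩
      · refine Or.inr (Set.mem_iUnion.2 ⟨m n, hx, ?_⟩)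
        exact Set.mem_biUnion ⟨hdn, rfl⟩ (subset_closure hn)
    calc (1:ℝ≥0∞) = ρ F := hρF.symm
      _ ≤ ρ ((F ∩ Z) ∪ ⋃ M, A M) := measure_mono hsub2
      _ ≤ ρ (F ∩ Z) + ρ (⋃ M, A M) := measure_union_le _ _
      _ = ρ (⋃ M, A M) := by rw [hZ0, zero_add]
      _ ≤ ∑' M, ρ (A M) := measure_iUnion_le _
  -- find a good scale M
  have hexM : ∃ M, K ≤ M ∧ (((M:ℝ≥0∞)) ^ 2)⁻¹ < ρ (A M) := by
    by_contra hcon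
    push_neg at hcon
    have htail := ennreal_tail_lt_one (K := K) (by omega) (fun M => ρ (A M)) ?_
    · exact absurd h1le (not_le.2 htail)
    intro M
    split_ifs with hKM
    · exact hcon M hKM
    · have hSempty : S M = ∅ := by
        ext n
        simp only [hS, Set.mem_setOf_eq, Set.mem_empty_iff_false, iff_false, not_and]
        intro hdn heq
        exact hKM (heq ▸ ((hm n) hdn).2.2)
      have : A M = ∅ := by
        rw [hA]
        simp [hU, hSempty]
      simp [this]
  obtain ⟨M, hKM, hρA⟩ := hexM
  have hM1 : 1 ≤ M := by omega
  have hMM₀ : M₀ ≤ M := by omega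
  have hcount := H M hMM₀ (A M) (hAmeas M) Set.inter_subset_left hρA
  set e : ℝ := s * ((T * M : ℕ) : ℝ) with he
  set B : ℝ≥0∞ := ((2:ℝ≥0∞) ^ (T + 2)) ^ d with hB
  have hB0 : B ≠ 0 := by
    rw [hB]; positivity
  have hBtop : B ≠ ∞ := by
    rw [hB]
    exact ENNReal.pow_ne_top (ENNReal.pow_ne_top (by norm_num))
  -- step 1: count ≤ ∑_n per-set counts
  have hstep1 : (∑' k : Fin d → ℤ,
        if (dyadicCube d (T * M) k ∩ A M).Nonempty then (1 : ℝ≥0∞) else 0)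
      ≤ ∑' n : ℕ, ∑' k : Fin d → ℤ,
        (if n ∈ S M ∧ (dyadicCube d (T * M) k ∩ closure (t n)).Nonempty
          then (1:ℝ≥0∞) else 0) := by
    rw [← ENNReal.tsum_comm]
    refine ENNReal.tsum_le_tsum fun k => ?_
    split_ifs with hne
    · obtain ⟨x, hx1, hx2⟩ := hne
      obtain ⟨n, hnS, hxn⟩ := Set.mem_iUnion₂.1 hx2.2
      refine le_trans ?_ (ENNReal.le_tsum n)
      rw [if_pos ⟨hnS, ⟨x, hx1, hxn⟩⟩]
    · exact zero_le
  -- step 2: per-set counts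
  have hstep2 : ∀ n : ℕ, (∑' k : Fin d → ℤ,
        (if n ∈ S M ∧ (dyadicCube d (T * M) k ∩ closure (t n)).Nonempty
          then (1:ℝ≥0∞) else 0))
      ≤ if n ∈ S M then B else 0 := by
    intro n
    by_cases hnS : n ∈ S M
    · rw [if_pos hnS]
      have heq : ∀ k : Fin d → ℤ,
          (if n ∈ S M ∧ (dyadicCube d (T * M) k ∩ closure (t n)).Nonempty
            then (1:ℝ≥0∞) else 0)
          = (if (dyadicCube d (T * M) k ∩ closure (t n)).Nonempty then (1:ℝ≥0∞) else 0) := by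
        intro k; simp [hnS]
      rw [tsum_congr heq, hB]
      refine tsum_cube_count (T * M) T (closure (t n)) ?_
      have hd1 : EMetric.diam (closure (t n)) ≤ ((2:ℝ≥0∞) ^ (T * (M - 1)))⁻¹ := by
        rw [show EMetric.diam (closure (t n)) = EMetric.diam (t n) from Metric.ediam_closure _]
        exact ((hm n) hnS.1).2.1.trans (by rw [hnS.2])
      refine hd1.trans (le_of_eq ?_)
      have harith : T * (M - 1) + T = T * M := by
        obtain ⟨m', rfl⟩ : ∃ m', M = m' + 1 := ⟨M - 1, by omega⟩
        simp [Nat.mul_succ]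
      have hreal : ((2:ℝ) ^ T / 2 ^ (T * M)) = ((2:ℝ) ^ (T * (M - 1)))⁻¹ := by
        rw [← harith, pow_add]
        field_simp
      rw [hreal, ENNReal.ofReal_inv_of_pos (by positivity), ENNReal.ofReal_pow (by norm_num)]
      norm_num
    · rw [if_neg hnS]
      have : ∀ k : Fin d → ℤ, (if n ∈ S M ∧ (dyadicCube d (T * M) k ∩ closure (t n)).Nonempty
          then (1:ℝ≥0∞) else 0) = 0 := by
        intro k; simp [hnS]
      rw [tsum_congr this]
      simp
  -- step 4: indicator of S M bounded by 2^e * diam^s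
  have hstep4 : ∀ n : ℕ, (if n ∈ S M then (1:ℝ≥0∞) else 0)
      ≤ (if n ∈ S M then (2:ℝ≥0∞) ^ e * EMetric.diam (t n) ^ s else 0) := by
    intro n
    by_cases hnS : n ∈ S M
    · rw [if_pos hnS, if_pos hnS]
      have hlow : ((2:ℝ≥0∞) ^ (T * M))⁻¹ ≤ EMetric.diam (t n) :=
        le_of_lt (hnS.2 ▸ ((hm n) hnS.1).1)
      have hrle : (((2:ℝ≥0∞) ^ (T * M))⁻¹) ^ s ≤ EMetric.diam (t n) ^ s :=
        ENNReal.rpow_le_rpow hlow hs.le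
      have hone : (2:ℝ≥0∞) ^ e * (((2:ℝ≥0∞) ^ (T * M))⁻¹) ^ s = 1 := by
        rw [← ENNReal.rpow_natCast (2:ℝ≥0∞) (T * M), ← ENNReal.rpow_neg,
          ← ENNReal.rpow_mul, ← ENNReal.rpow_add _ _ (by norm_num) (by norm_num), he,
          show s * ((T * M : ℕ) : ℝ) + -((T * M : ℕ) : ℝ) * s = 0 by ring,
          ENNReal.rpow_zero]
      calc (1:ℝ≥0∞) = (2:ℝ≥0∞) ^ e * (((2:ℝ≥0∞) ^ (T * M))⁻¹) ^ s := hone.symm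
        _ ≤ (2:ℝ≥0∞) ^ e * EMetric.diam (t n) ^ s := mul_le_mul_right hrle _
    · simp [hnS]
  -- step 6
  have hstep6 : (∑' n : ℕ, if n ∈ S M then EMetric.diam (t n) ^ s else 0)
      ≤ ∑' n, ⨆ _ : (t n).Nonempty, EMetric.diam (t n) ^ s := by
    refine ENNReal.tsum_le_tsum fun n => ?_
    by_cases hnS : n ∈ S M
    · rw [if_pos hnS]
      have hne : (t n).Nonempty := by
        rw [Set.nonempty_iff_ne_empty]
        intro hemp
        exact hnS.1 (by rw [hemp]; exact Metric.ediam_empty)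
      rw [iSup_pos hne]
    · simp [hnS]
  -- combine
  have hchain : (2:ℝ≥0∞) ^ e ≤ B * ((2:ℝ≥0∞) ^ e *
      ∑' n : ℕ, if n ∈ S M then EMetric.diam (t n) ^ s else 0) := by
    calc (2:ℝ≥0∞) ^ e ≤ _ := hcount
      _ ≤ ∑' n : ℕ, ∑' k : Fin d → ℤ,
          (if n ∈ S M ∧ (dyadicCube d (T * M) k ∩ closure (t n)).Nonempty
            then (1:ℝ≥0∞) else 0) := hstep1
      _ ≤ ∑' n : ℕ, (if n ∈ S M then B else 0) := ENNReal.tsum_le_tsum hstep2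
      _ = B * ∑' n : ℕ, (if n ∈ S M then (1:ℝ≥0∞) else 0) := by
          rw [← ENNReal.tsum_mul_left]
          refine tsum_congr fun n => ?_
          split_ifs <;> simp
      _ ≤ B * ∑' n : ℕ, (if n ∈ S M then (2:ℝ≥0∞) ^ e * EMetric.diam (t n) ^ s else 0) :=
          mul_le_mul_right (ENNReal.tsum_le_tsum hstep4) B
      _ = B * ((2:ℝ≥0∞) ^ e * ∑' n : ℕ, if n ∈ S M then EMetric.diam (t n) ^ s else 0) := by
          congr 1
          rw [← ENNReal.tsum_mul_left]
          refine tsum_congr fun n => ?_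
          split_ifs <;> simp
  have h2e0 : (2:ℝ≥0∞) ^ e ≠ 0 := by
    exact (ENNReal.rpow_pos (by norm_num) (by norm_num)).ne'
  have h2etop : (2:ℝ≥0∞) ^ e ≠ ∞ := by
    refine ENNReal.rpow_ne_top_of_nonneg ?_ (by norm_num)
    have : (0:ℝ) ≤ ((T * M : ℕ) : ℝ) := Nat.cast_nonneg _
    positivity
  have h1BS : 1 ≤ B * ∑' n : ℕ, (if n ∈ S M then EMetric.diam (t n) ^ s else 0) := by
    have := hchain
    rw [show B * ((2:ℝ≥0∞) ^ e * ∑' n : ℕ, if n ∈ S M then EMetric.diam (t n) ^ s else 0)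
      = (2:ℝ≥0∞) ^ e * (B * ∑' n : ℕ, if n ∈ S M then EMetric.diam (t n) ^ s else 0) by ring]
      at this
    have h2 : (2:ℝ≥0∞) ^ e * 1 ≤ (2:ℝ≥0∞) ^ e *
        (B * ∑' n : ℕ, if n ∈ S M then EMetric.diam (t n) ^ s else 0) := by
      rwa [mul_one]
    exact (ENNReal.mul_le_mul_iff_right h2e0 h2etop).1 h2
  calc B⁻¹ = B⁻¹ * 1 := (mul_one _).symm
    _ ≤ B⁻¹ * (B * ∑' n : ℕ, (if n ∈ S M then EMetric.diam (t n) ^ s else 0)) :=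
        mul_le_mul_right h1BS _
    _ = ∑' n : ℕ, (if n ∈ S M then EMetric.diam (t n) ^ s else 0) := by
        rw [← mul_assoc, ENNReal.inv_mul_cancel hB0 hBtop, one_mul]
    _ ≤ _ := hstep6

open Classical in
/-- **Lemma (mass distribution principle for box counting).** Fix `T, d ≥ 1`. There is
`c > 0` (depending only on `T, d`) such that: if `F ⊆ ℝ^d` is Borel, `ρ` a Borel probability
measure with `ρ(F) = 1`, and for some `M₀ ≥ 2`, `s > 0` every Borel `F' ⊆ F` with
`ρ(F') > M⁻²` (for `M ≥ M₀`) meets at least `2^{sTM}` dyadic cubes of side `2^{-TM}`, then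
`H^s(F) ≥ c`; in particular `dimH F ≥ s`. -/
theorem statement10 (T d : ℕ) (hT : 1 ≤ T) (hd : 1 ≤ d) :
    ∃ c : ℝ, 0 < c ∧
      ∀ (F : Set (EuclideanSpace ℝ (Fin d))) (ρ : Measure (EuclideanSpace ℝ (Fin d))),
        MeasurableSet F → IsProbabilityMeasure ρ → ρ F = 1 →
        ∀ (s : ℝ) (M₀ : ℕ), 0 < s → 2 ≤ M₀ →
          (∀ M : ℕ, M₀ ≤ M →
            ∀ F' : Set (EuclideanSpace ℝ (Fin d)), MeasurableSet F' → F' ⊆ F →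
              (((M : ℝ≥0∞)) ^ 2)⁻¹ < ρ F' →
              (2 : ℝ≥0∞) ^ (s * ((T * M : ℕ) : ℝ)) ≤
                ∑' k : Fin d → ℤ,
                  if (dyadicCube d (T * M) k ∩ F').Nonempty then (1 : ℝ≥0∞) else 0) →
          ENNReal.ofReal c ≤ μH[s] F ∧ ENNReal.ofReal s ≤ dimH F := by
  refine ⟨(((2:ℝ) ^ (T + 2)) ^ d)⁻¹, by positivity, ?_⟩
  intro F ρ hF hprob hρF s M₀ hs hM₀ H
  have hofReal : ENNReal.ofReal ((((2:ℝ) ^ (T + 2)) ^ d)⁻¹)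
      = (((2:ℝ≥0∞) ^ (T + 2)) ^ d)⁻¹ := by
    rw [ENNReal.ofReal_inv_of_pos (by positivity), ENNReal.ofReal_pow (by positivity),
      ENNReal.ofReal_pow (by norm_num)]
    norm_num
  have hHaus : ENNReal.ofReal ((((2:ℝ) ^ (T + 2)) ^ d)⁻¹) ≤ μH[s] F := by
    rw [Measure.hausdorffMeasure_apply]
    refine le_iSup₂_of_le (((2:ℝ≥0∞) ^ (T * (M₀ + 1)))⁻¹)
      (ENNReal.inv_pos.2 (ENNReal.pow_ne_top (by norm_num))) ?_
    refine le_iInf fun t => le_iInf fun hcov => le_iInf fun hdiam => ?_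
    rw [hofReal]
    exact cover_sum_bound hT hd F ρ hF hρF s M₀ hs hM₀ H t hcov hdiam
  refine ⟨hHaus, ?_⟩
  have hne0 : μH[s] F ≠ 0 :=
    ne_of_gt (lt_of_lt_of_le (ENNReal.ofReal_pos.2 (by positivity)) hHaus)
  have hcoe : (s.toNNReal : ℝ) = s := Real.coe_toNNReal s hs.le
  have h2 := le_dimH_of_hausdorffMeasure_ne_zero (d := s.toNNReal)
    (s := F) (by rw [hcoe]; exact hne0)
  exact h2
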